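/- Hedberg's pointwise estimate: let 0 < α < d, 1 ≤ p < d/α, and f ∈ L^p(ℝ^d). Then there is a constant C = C(α, p, d) such that for every x ∈ ℝ^d, |I_α f(x)| ≤ C · (Mf(x))^{1 - αp/d} · ‖f‖_{L^p}^{αp/d}, where Mf is the Hardy–Littlewood maximal function. -/

import Mathlib

open MeasureTheory ENNReal NNReal

/-- The normalizing constant of the Riesz potential:
`γ(α) = π^(d/2) 2^α Γ(α/2) / Γ((d-α)/2)`. -/
noncomputable def rieszGamma (d : ℕ) (α : ℝ) : ℝ :=
  Real.pi ^ ((d : ℝ) / 2) * 2 ^ α * Real.Gamma (α / 2) / Real.Gamma (((d : ℝ) - α) / 2)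

/-- The Riesz potential `I_α f(x) = (1/γ(α)) ∫ f(y) / |x-y|^(d-α) dy`. -/
noncomputable def rieszPotential (d : ℕ) (α : ℝ) (f : EuclideanSpace ℝ (Fin d) → ℝ)
    (x : EuclideanSpace ℝ (Fin d)) : ℝ :=
  (rieszGamma d α)⁻¹ * ∫ y, f y / ‖x - y‖ ^ ((d : ℝ) - α)

/-- The (centered) Hardy–Littlewood maximal function, valued in `ℝ≥0∞`. -/
noncomputable def maximalFn (d : ℕ) (f : EuclideanSpace ℝ (Fin d) → ℝ)
    (x : EuclideanSpace ℝ (Fin d)) : ℝ≥0∞ :=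
  ⨆ r : {r : ℝ // 0 < r},
    (volume (Metric.ball x r.1))⁻¹ * ∫⁻ y in Metric.ball x r.1, ENNReal.ofReal |f y|

open Metric

namespace HedbergAux

/-- arithmetic for the near annuli -/
lemma ann_arith {R α : ℝ} (dd : ℝ) (hR : 0 < R) (j : ℕ) :
    (R / 2 ^ (j + 1)) ^ (α - dd) * (R / 2 ^ j) ^ dd
      = R ^ α * 2 ^ (dd - α) * ((2 : ℝ) ^ (-α)) ^ j := by
  have h2 : (0:ℝ) < 2 := two_pos
  have e1 : (R / 2 ^ (j + 1)) = R * 2 ^ (-((j : ℝ) + 1)) := by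
    rw [Real.rpow_neg h2.le]
    have : ((j : ℝ) + 1) = ((j + 1 : ℕ) : ℝ) := by push_cast; ring
    rw [this, Real.rpow_natCast, div_eq_mul_inv]
  have e2 : (R / 2 ^ j) = R * 2 ^ (-(j : ℝ)) := by
    rw [Real.rpow_neg h2.le, Real.rpow_natCast, div_eq_mul_inv]
  rw [e1, e2, Real.mul_rpow hR.le (Real.rpow_nonneg h2.le _),
    Real.mul_rpow hR.le (Real.rpow_nonneg h2.le _),
    ← Real.rpow_mul h2.le, ← Real.rpow_mul h2.le,
    ← Real.rpow_natCast ((2:ℝ) ^ (-α)) j, ← Real.rpow_mul h2.le,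
    mul_mul_mul_comm, ← Real.rpow_add hR, ← Real.rpow_add h2,
    mul_assoc, ← Real.rpow_add h2]
  rw [show α - dd + dd = α by ring]
  congr 1
  congr 1
  ring

/-- arithmetic for the far annuli -/
lemma ann_arith_far {R : ℝ} (s dd : ℝ) (hR : 0 < R) (j : ℕ) :
    (R * 2 ^ j) ^ s * (R * 2 ^ (j + 1)) ^ dd
      = R ^ (s + dd) * 2 ^ dd * ((2 : ℝ) ^ (s + dd)) ^ j := by
  have h2 : (0:ℝ) < 2 := two_pos
  have e1 : ((2:ℝ) ^ (j + 1) : ℝ) = 2 ^ ((j : ℝ) + 1) := by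
    have : ((j : ℝ) + 1) = ((j + 1 : ℕ) : ℝ) := by push_cast; ring
    rw [this, Real.rpow_natCast]
  have e2 : ((2:ℝ) ^ j : ℝ) = 2 ^ (j : ℝ) := (Real.rpow_natCast 2 j).symm
  rw [e1, e2, Real.mul_rpow hR.le (Real.rpow_nonneg h2.le _),
    Real.mul_rpow hR.le (Real.rpow_nonneg h2.le _),
    ← Real.rpow_mul h2.le, ← Real.rpow_mul h2.le,
    ← Real.rpow_natCast ((2:ℝ) ^ (s + dd)) j, ← Real.rpow_mul h2.le,
    mul_mul_mul_comm, ← Real.rpow_add hR, ← Real.rpow_add h2,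
    mul_assoc, ← Real.rpow_add h2]
  congr 1
  congr 1
  ring

/-- near dyadic cover -/
lemma near_cover {E : Type*} [MetricSpace E] {x : E} {R : ℝ} (hR : 0 < R) :
    ball x R ⊆ {x} ∪ ⋃ j : ℕ, (ball x (R / 2 ^ j) \ ball x (R / 2 ^ (j + 1))) := by
  intro y hy
  rcases eq_or_ne y x with h | h
  · exact Or.inl (by simp [h])
  refine Or.inr (Set.mem_iUnion.2 ?_)
  have ht : 0 < dist y x := dist_pos.2 h
  have htR : dist y x < R := mem_ball.1 hy
  have hex : ∃ j : ℕ, R / 2 ^ (j + 1) ≤ dist y x := by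
    obtain ⟨n, hn⟩ := exists_pow_lt_of_lt_one (div_pos ht hR) (by norm_num : (1:ℝ)/2 < 1)
    refine ⟨n, ?_⟩
    have h1 : ((1:ℝ)/2) ^ n * R < dist y x := (lt_div_iff₀ hR).1 hn
    have h2 : R / 2 ^ (n + 1) ≤ R / 2 ^ n := by
      gcongr
      · norm_num
      · exact Nat.le_succ n
    have h3 : R / 2 ^ n = ((1:ℝ)/2) ^ n * R := by
      rw [div_pow, one_pow]; ring
    linarith [h2, h3 ▸ h1]
  classical
  refine ⟨Nat.find hex, ?_, fun hc => absurd (mem_ball.1 hc) (not_lt.2 (Nat.find_spec hex))⟩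
  show dist y x < R / 2 ^ Nat.find hex
  rcases Nat.eq_zero_or_pos (Nat.find hex) with h0 | hpos
  · rw [h0]; simpa using htR
  · have hlt : Nat.find hex - 1 < Nat.find hex := Nat.sub_lt hpos one_pos
    have := Nat.find_min hex hlt
    push_neg at this
    have heq : Nat.find hex - 1 + 1 = Nat.find hex := Nat.succ_pred_eq_of_pos hpos
    rwa [heq] at this

/-- far dyadic cover -/
lemma far_cover {E : Type*} [MetricSpace E] {x : E} {R : ℝ} (hR : 0 < R) :
    (ball x R)ᶜ ⊆ ⋃ j : ℕ, (ball x (R * 2 ^ (j + 1)) \ ball x (R * 2 ^ j)) := by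
  intro y hy
  have hRt : R ≤ dist y x := by simpa [mem_ball, not_lt] using hy
  have hex : ∃ j : ℕ, dist y x < R * 2 ^ (j + 1) := by
    obtain ⟨n, hn⟩ := pow_unbounded_of_one_lt (dist y x / R) (by norm_num : (1:ℝ) < 2)
    refine ⟨n, ?_⟩
    have h1 : dist y x < 2 ^ n * R := by
      rw [div_lt_iff₀ hR] at hn; linarith
    have h2 : (2:ℝ) ^ n ≤ 2 ^ (n + 1) := pow_le_pow_right₀ (by norm_num) (Nat.le_succ n)
    nlinarith
  classical
  refine Set.mem_iUnion.2 ⟨Nat.find hex, mem_ball.2 (Nat.find_spec hex), fun hc => ?_⟩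
  have hlow : R * 2 ^ (Nat.find hex) ≤ dist y x := by
    rcases Nat.eq_zero_or_pos (Nat.find hex) with h0 | hpos
    · rw [h0]; simpa using hRt
    · have hlt : Nat.find hex - 1 < Nat.find hex := Nat.sub_lt hpos one_pos
      have := Nat.find_min hex hlt
      push_neg at this
      have heq : Nat.find hex - 1 + 1 = Nat.find hex := Nat.succ_pred_eq_of_pos hpos
      rwa [heq] at this
  exact absurd (mem_ball.1 hc) (not_lt.2 hlow)

end HedbergAux

section Part2
open HedbergAux

variable {d : ℕ}

local notation "E" => EuclideanSpace ℝ (Fin d)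

namespace HedbergAux

lemma annulus_bound (g : EuclideanSpace ℝ (Fin d) → ℝ≥0∞) {x : EuclideanSpace ℝ (Fin d)}
    {r1 r2 s : ℝ} (hr1 : 0 < r1) (hs : s ≤ 0) :
    ∫⁻ y in ball x r2 \ ball x r1, g y * ENNReal.ofReal (‖x - y‖ ^ s)
      ≤ ENNReal.ofReal (r1 ^ s) * ∫⁻ y in ball x r2, g y := by
  have hmeas : MeasurableSet (ball x r2 \ ball x r1) :=
    measurableSet_ball.diff measurableSet_ball
  have hpt : ∀ y ∈ ball x r2 \ ball x r1,
      g y * ENNReal.ofReal (‖x - y‖ ^ s) ≤ ENNReal.ofReal (r1 ^ s) * g y := by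
    intro y hy
    have h1 : r1 ≤ ‖x - y‖ := by
      have h2 := hy.2
      rw [mem_ball, not_lt] at h2
      have : ‖x - y‖ = dist y x := by rw [dist_comm, dist_eq_norm]
      linarith [h2, this.ge]
    have h3 : ‖x - y‖ ^ s ≤ r1 ^ s := Real.rpow_le_rpow_of_nonpos hr1 h1 hs
    rw [mul_comm]
    exact mul_le_mul' (ENNReal.ofReal_le_ofReal h3) le_rfl
  calc ∫⁻ y in ball x r2 \ ball x r1, g y * ENNReal.ofReal (‖x - y‖ ^ s)
      ≤ ∫⁻ y in ball x r2 \ ball x r1, ENNReal.ofReal (r1 ^ s) * g y :=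
        lintegral_mono_ae (ae_restrict_of_forall_mem hmeas hpt)
    _ = ENNReal.ofReal (r1 ^ s) * ∫⁻ y in ball x r2 \ ball x r1, g y :=
        lintegral_const_mul' _ _ ENNReal.ofReal_ne_top
    _ ≤ _ := mul_le_mul_right (lintegral_mono_set Set.diff_subset) _

lemma volume_ball_eq (hd : 1 ≤ d) (x : EuclideanSpace ℝ (Fin d)) {r : ℝ} (hr : 0 ≤ r) :
    volume (ball x r)
      = ENNReal.ofReal (r ^ (d : ℝ)) * volume (ball (0 : EuclideanSpace ℝ (Fin d)) 1) := by
  haveI : Nonempty (Fin d) := ⟨⟨0, hd⟩⟩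
  haveI : Nontrivial (EuclideanSpace ℝ (Fin d)) := inferInstance
  rw [Measure.addHaar_ball _ _ hr, finrank_euclideanSpace_fin, ← Real.rpow_natCast r d]

lemma lintegral_ball_le_maximal (f : EuclideanSpace ℝ (Fin d) → ℝ)
    (x : EuclideanSpace ℝ (Fin d)) {r : ℝ} (hr : 0 < r) :
    ∫⁻ y in ball x r, ENNReal.ofReal |f y| ≤ volume (ball x r) * maximalFn d f x := by
  have h0 : volume (ball x r) ≠ 0 := (measure_ball_pos volume x hr).ne'
  have ht : volume (ball x r) ≠ ⊤ := measure_ball_lt_top.ne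
  have hle : (volume (ball x r))⁻¹ * ∫⁻ y in ball x r, ENNReal.ofReal |f y|
      ≤ maximalFn d f x := by
    unfold maximalFn
    exact le_iSup_of_le ⟨r, hr⟩ le_rfl
  calc ∫⁻ y in ball x r, ENNReal.ofReal |f y|
      = volume (ball x r) * ((volume (ball x r))⁻¹ * ∫⁻ y in ball x r, ENNReal.ofReal |f y|) := by
        rw [← mul_assoc, ENNReal.mul_inv_cancel h0 ht, one_mul]
    _ ≤ _ := mul_le_mul_right hle _

lemma hedberg_pointwise_le {α : ℝ} (hα : 0 < α) (hαd : α < d)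
    (f : EuclideanSpace ℝ (Fin d) → ℝ) (x : EuclideanSpace ℝ (Fin d)) :
    ENNReal.ofReal |rieszPotential d α f x| ≤
      ENNReal.ofReal (rieszGamma d α)⁻¹ *
        ∫⁻ y, ENNReal.ofReal |f y| * ENNReal.ofReal (‖x - y‖ ^ (α - (d : ℝ))) := by
  have hγ : 0 < rieszGamma d α := by
    have h1 : 0 < Real.Gamma (α / 2) := Real.Gamma_pos_of_pos (by linarith)
    have h2 : 0 < Real.Gamma (((d : ℝ) - α) / 2) := Real.Gamma_pos_of_pos (by linarith)
    have h3 : 0 < Real.pi ^ ((d : ℝ) / 2) := Real.rpow_pos_of_pos Real.pi_pos _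
    have h4 : 0 < (2 : ℝ) ^ α := Real.rpow_pos_of_pos two_pos _
    unfold rieszGamma
    positivity
  rw [rieszPotential, abs_mul, abs_of_pos (inv_pos.2 hγ), ENNReal.ofReal_mul (inv_pos.2 hγ).le]
  refine mul_le_mul_right ?_ _
  have h1 := MeasureTheory.norm_integral_le_lintegral_norm (μ := volume)
    (fun y : EuclideanSpace ℝ (Fin d) => f y / ‖x - y‖ ^ ((d : ℝ) - α))
  have h2 : ENNReal.ofReal |∫ y, f y / ‖x - y‖ ^ ((d : ℝ) - α)|
      ≤ ∫⁻ y, ENNReal.ofReal ‖f y / ‖x - y‖ ^ ((d : ℝ) - α)‖ := by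
    rw [← Real.norm_eq_abs]
    exact (ENNReal.ofReal_le_ofReal h1).trans ENNReal.ofReal_toReal_le
  refine h2.trans (le_of_eq (lintegral_congr fun y => ?_))
  rw [Real.norm_eq_abs, abs_div, abs_of_nonneg (Real.rpow_nonneg (norm_nonneg _) _),
    div_eq_mul_inv, ← Real.rpow_neg (norm_nonneg _), ENNReal.ofReal_mul (abs_nonneg _), neg_sub]

end HedbergAux
end Part2

namespace HedbergAux

lemma hedberg_near {d : ℕ} (hd : 1 ≤ d) {α : ℝ} (hα : 0 < α) (hαd : α < d) :
    ∃ Cn : ℝ≥0∞, Cn ≠ ⊤ ∧ ∀ (f : EuclideanSpace ℝ (Fin d) → ℝ)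
      (x : EuclideanSpace ℝ (Fin d)) (R : ℝ), 0 < R →
      ∫⁻ y in ball x R, ENNReal.ofReal |f y| * ENNReal.ofReal (‖x - y‖ ^ (α - (d : ℝ))) ≤
        Cn * ENNReal.ofReal (R ^ α) * maximalFn d f x := by
  haveI : Nonempty (Fin d) := ⟨⟨0, hd⟩⟩
  haveI : Nontrivial (EuclideanSpace ℝ (Fin d)) := inferInstance
  set v1 := volume (ball (0 : EuclideanSpace ℝ (Fin d)) 1) with hv1
  have hc1 : ENNReal.ofReal ((2:ℝ) ^ (-α)) < 1 :=
    ENNReal.ofReal_lt_one.2 (Real.rpow_lt_one_of_one_lt_of_neg one_lt_two (neg_lt_zero.2 hα))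
  refine ⟨ENNReal.ofReal ((2:ℝ) ^ ((d : ℝ) - α)) * ((1 - ENNReal.ofReal ((2:ℝ) ^ (-α)))⁻¹ * v1),
    ENNReal.mul_ne_top ENNReal.ofReal_ne_top
      (ENNReal.mul_ne_top (ENNReal.inv_ne_top.2 (tsub_pos_of_lt hc1).ne') measure_ball_lt_top.ne),
    ?_⟩
  intro f x R hR
  set g : EuclideanSpace ℝ (Fin d) → ℝ≥0∞ := fun y => ENNReal.ofReal |f y| with hg
  set M := maximalFn d f x with hM
  -- annulus estimates
  have hAj : ∀ j : ℕ,
      ∫⁻ y in ball x (R / 2 ^ j) \ ball x (R / 2 ^ (j + 1)),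
          g y * ENNReal.ofReal (‖x - y‖ ^ (α - (d : ℝ)))
        ≤ ENNReal.ofReal (R ^ α * 2 ^ ((d : ℝ) - α) * ((2:ℝ) ^ (-α)) ^ j) * (v1 * M) := by
    intro j
    have h1 : (0:ℝ) < R / 2 ^ (j + 1) := by positivity
    have h2 : (0:ℝ) < R / 2 ^ j := by positivity
    have h3 := annulus_bound (d := d) g (x := x) (r1 := R / 2 ^ (j + 1)) (r2 := R / 2 ^ j)
      (s := α - (d : ℝ)) h1 (by linarith)
    have h4 : ∫⁻ y in ball x (R / 2 ^ j), g y ≤ volume (ball x (R / 2 ^ j)) * M :=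
      lintegral_ball_le_maximal f x h2
    calc ∫⁻ y in ball x (R / 2 ^ j) \ ball x (R / 2 ^ (j + 1)),
            g y * ENNReal.ofReal (‖x - y‖ ^ (α - (d : ℝ)))
        ≤ ENNReal.ofReal ((R / 2 ^ (j + 1)) ^ (α - (d : ℝ))) * (volume (ball x (R / 2 ^ j)) * M) :=
          h3.trans (mul_le_mul_right h4 _)
      _ = ENNReal.ofReal ((R / 2 ^ (j + 1)) ^ (α - (d : ℝ)))
            * (ENNReal.ofReal ((R / 2 ^ j) ^ (d : ℝ)) * v1 * M) := by
          rw [volume_ball_eq hd x h2.le]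
      _ = ENNReal.ofReal ((R / 2 ^ (j + 1)) ^ (α - (d : ℝ)) * (R / 2 ^ j) ^ (d : ℝ)) * (v1 * M) := by
          rw [ENNReal.ofReal_mul (Real.rpow_nonneg h1.le _)]; ring
      _ = ENNReal.ofReal (R ^ α * 2 ^ ((d : ℝ) - α) * ((2:ℝ) ^ (-α)) ^ j) * (v1 * M) := by
          rw [ann_arith (d : ℝ) hR j]
  have hsing : ∫⁻ y in ({x} : Set (EuclideanSpace ℝ (Fin d))),
      g y * ENNReal.ofReal (‖x - y‖ ^ (α - (d : ℝ))) = 0 :=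
    setLIntegral_measure_zero _ _ (measure_singleton x)
  calc ∫⁻ y in ball x R, g y * ENNReal.ofReal (‖x - y‖ ^ (α - (d : ℝ)))
      ≤ ∫⁻ y in ({x} ∪ ⋃ j : ℕ, (ball x (R / 2 ^ j) \ ball x (R / 2 ^ (j + 1))) :
          Set (EuclideanSpace ℝ (Fin d))),
          g y * ENNReal.ofReal (‖x - y‖ ^ (α - (d : ℝ))) :=
        lintegral_mono_set (near_cover hR)
    _ ≤ (∫⁻ y in ({x} : Set (EuclideanSpace ℝ (Fin d))),
            g y * ENNReal.ofReal (‖x - y‖ ^ (α - (d : ℝ))))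
          + ∫⁻ y in (⋃ j : ℕ, (ball x (R / 2 ^ j) \ ball x (R / 2 ^ (j + 1)))),
            g y * ENNReal.ofReal (‖x - y‖ ^ (α - (d : ℝ))) := lintegral_union_le _ _ _
    _ ≤ 0 + ∑' j : ℕ, ∫⁻ y in ball x (R / 2 ^ j) \ ball x (R / 2 ^ (j + 1)),
            g y * ENNReal.ofReal (‖x - y‖ ^ (α - (d : ℝ))) := by
        rw [hsing]; exact add_le_add le_rfl (lintegral_iUnion_le _ _)
    _ ≤ 0 + ∑' j : ℕ, ENNReal.ofReal (R ^ α * 2 ^ ((d : ℝ) - α) * ((2:ℝ) ^ (-α)) ^ j) * (v1 * M) :=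
        add_le_add le_rfl (ENNReal.tsum_le_tsum hAj)
    _ = ENNReal.ofReal (R ^ α * 2 ^ ((d : ℝ) - α))
          * ((1 - ENNReal.ofReal ((2:ℝ) ^ (-α)))⁻¹ * (v1 * M)) := by
        rw [zero_add]
        have hpt : ∀ j : ℕ, ENNReal.ofReal (R ^ α * 2 ^ ((d : ℝ) - α) * ((2:ℝ) ^ (-α)) ^ j) * (v1 * M)
            = (ENNReal.ofReal (R ^ α * 2 ^ ((d : ℝ) - α)) * ENNReal.ofReal ((2:ℝ) ^ (-α)) ^ j)
                * (v1 * M) := by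
          intro j
          rw [ENNReal.ofReal_mul (by positivity), ENNReal.ofReal_pow (by positivity)]
        simp_rw [hpt]
        rw [ENNReal.tsum_mul_right, ENNReal.tsum_mul_left, ENNReal.tsum_geometric]
        ring
    _ = ENNReal.ofReal ((2:ℝ) ^ ((d : ℝ) - α)) * ((1 - ENNReal.ofReal ((2:ℝ) ^ (-α)))⁻¹ * v1)
          * ENNReal.ofReal (R ^ α) * M := by
        rw [ENNReal.ofReal_mul (by positivity : (0:ℝ) ≤ R ^ α)]
        ring

end HedbergAux

namespace HedbergAux

lemma hedberg_far_kernel {d : ℕ} (hd : 1 ≤ d) {s : ℝ} (hsd : s + d < 0)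
    (x : EuclideanSpace ℝ (Fin d)) (R : ℝ) (hR : 0 < R) :
    ∫⁻ y in (ball x R)ᶜ, ENNReal.ofReal (‖x - y‖ ^ s) ≤
      ENNReal.ofReal (R ^ (s + (d : ℝ))) *
        (ENNReal.ofReal ((2:ℝ) ^ (d : ℝ)) * ((1 - ENNReal.ofReal ((2:ℝ) ^ (s + (d : ℝ))))⁻¹
          * volume (ball (0 : EuclideanSpace ℝ (Fin d)) 1))) := by
  have hd1 : (1:ℝ) ≤ d := by exact_mod_cast hd
  have hs0 : s ≤ 0 := by linarith
  set v1 := volume (ball (0 : EuclideanSpace ℝ (Fin d)) 1) with hv1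
  have hBj : ∀ j : ℕ,
      ∫⁻ y in ball x (R * 2 ^ (j + 1)) \ ball x (R * 2 ^ j), ENNReal.ofReal (‖x - y‖ ^ s)
        ≤ ENNReal.ofReal (R ^ (s + (d : ℝ)) * 2 ^ (d : ℝ) * ((2:ℝ) ^ (s + (d : ℝ))) ^ j) * v1 := by
    intro j
    have h1 : (0:ℝ) < R * 2 ^ j := by positivity
    have h2 : (0:ℝ) < R * 2 ^ (j + 1) := by positivity
    have h3 := annulus_bound (d := d) (fun _ => (1 : ℝ≥0∞)) (x := x)
      (r1 := R * 2 ^ j) (r2 := R * 2 ^ (j + 1)) (s := s) h1 hs0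
    simp only [one_mul] at h3
    calc ∫⁻ y in ball x (R * 2 ^ (j + 1)) \ ball x (R * 2 ^ j), ENNReal.ofReal (‖x - y‖ ^ s)
        ≤ ENNReal.ofReal ((R * 2 ^ j) ^ s) * ∫⁻ _ in ball x (R * 2 ^ (j + 1)), (1:ℝ≥0∞) := h3
      _ = ENNReal.ofReal ((R * 2 ^ j) ^ s) * volume (ball x (R * 2 ^ (j + 1))) := by
          rw [setLIntegral_one]
      _ = ENNReal.ofReal ((R * 2 ^ j) ^ s) * (ENNReal.ofReal ((R * 2 ^ (j + 1)) ^ (d : ℝ)) * v1) := by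
          rw [volume_ball_eq hd x h2.le]
      _ = ENNReal.ofReal ((R * 2 ^ j) ^ s * (R * 2 ^ (j + 1)) ^ (d : ℝ)) * v1 := by
          rw [ENNReal.ofReal_mul (Real.rpow_nonneg h1.le _), mul_assoc]
      _ = ENNReal.ofReal (R ^ (s + (d : ℝ)) * 2 ^ (d : ℝ) * ((2:ℝ) ^ (s + (d : ℝ))) ^ j) * v1 := by
          rw [ann_arith_far s (d : ℝ) hR j]
  calc ∫⁻ y in (ball x R)ᶜ, ENNReal.ofReal (‖x - y‖ ^ s)
      ≤ ∫⁻ y in ⋃ j : ℕ, (ball x (R * 2 ^ (j + 1)) \ ball x (R * 2 ^ j)),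
          ENNReal.ofReal (‖x - y‖ ^ s) := lintegral_mono_set (far_cover hR)
    _ ≤ ∑' j : ℕ, ∫⁻ y in ball x (R * 2 ^ (j + 1)) \ ball x (R * 2 ^ j),
          ENNReal.ofReal (‖x - y‖ ^ s) := lintegral_iUnion_le _ _
    _ ≤ ∑' j : ℕ, ENNReal.ofReal (R ^ (s + (d : ℝ)) * 2 ^ (d : ℝ) * ((2:ℝ) ^ (s + (d : ℝ))) ^ j) * v1 :=
        ENNReal.tsum_le_tsum hBj
    _ = ENNReal.ofReal (R ^ (s + (d : ℝ)) * 2 ^ (d : ℝ))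
          * ((1 - ENNReal.ofReal ((2:ℝ) ^ (s + (d : ℝ))))⁻¹ * v1) := by
        have hpt : ∀ j : ℕ,
            ENNReal.ofReal (R ^ (s + (d : ℝ)) * 2 ^ (d : ℝ) * ((2:ℝ) ^ (s + (d : ℝ))) ^ j) * v1
              = (ENNReal.ofReal (R ^ (s + (d : ℝ)) * 2 ^ (d : ℝ))
                  * ENNReal.ofReal ((2:ℝ) ^ (s + (d : ℝ))) ^ j) * v1 := by
          intro j
          rw [ENNReal.ofReal_mul (by positivity), ENNReal.ofReal_pow (by positivity)]
        simp_rw [hpt]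
        rw [ENNReal.tsum_mul_right, ENNReal.tsum_mul_left, ENNReal.tsum_geometric]
        ring
    _ = _ := by
        rw [ENNReal.ofReal_mul (by positivity : (0:ℝ) ≤ R ^ (s + (d : ℝ)))]
        ring

end HedbergAux

namespace HedbergAux

lemma hedberg_far {d : ℕ} (hd : 1 ≤ d) {α p : ℝ} (hα : 0 < α) (hαd : α < d) (hp : 1 ≤ p)
    (hαp : α * p < d) :
    ∃ Cf : ℝ≥0∞, Cf ≠ ⊤ ∧ ∀ (f : EuclideanSpace ℝ (Fin d) → ℝ),
      MemLp f (ENNReal.ofReal p) volume →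
      ∀ (x : EuclideanSpace ℝ (Fin d)) (R : ℝ), 0 < R →
      ∫⁻ y in (ball x R)ᶜ, ENNReal.ofReal |f y| * ENNReal.ofReal (‖x - y‖ ^ (α - (d : ℝ))) ≤
        Cf * ENNReal.ofReal (R ^ (α - (d : ℝ) / p)) * eLpNorm f (ENNReal.ofReal p) volume := by
  have hd1 : (1:ℝ) ≤ d := by exact_mod_cast hd
  rcases eq_or_lt_of_le hp with hp1 | hp1
  · -- case p = 1
    refine ⟨1, one_ne_top, ?_⟩
    intro f hf x R hR
    subst hp1
    have hs0 : α - (d : ℝ) ≤ 0 := by linarith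
    have hpt : ∀ y ∈ (ball x R)ᶜ,
        ENNReal.ofReal |f y| * ENNReal.ofReal (‖x - y‖ ^ (α - (d : ℝ)))
          ≤ ENNReal.ofReal (R ^ (α - (d : ℝ))) * ENNReal.ofReal |f y| := by
      intro y hy
      have h2 : R ≤ dist y x := by simpa [mem_ball, not_lt] using hy
      have h2' : ‖x - y‖ = dist y x := by rw [dist_comm, dist_eq_norm]
      have h1 : R ≤ ‖x - y‖ := by rw [h2']; exact h2
      have h3 : ‖x - y‖ ^ (α - (d : ℝ)) ≤ R ^ (α - (d : ℝ)) :=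
        Real.rpow_le_rpow_of_nonpos hR h1 hs0
      rw [mul_comm]
      exact mul_le_mul' (ENNReal.ofReal_le_ofReal h3) le_rfl
    calc ∫⁻ y in (ball x R)ᶜ, ENNReal.ofReal |f y| * ENNReal.ofReal (‖x - y‖ ^ (α - (d : ℝ)))
        ≤ ∫⁻ y in (ball x R)ᶜ, ENNReal.ofReal (R ^ (α - (d : ℝ))) * ENNReal.ofReal |f y| :=
          lintegral_mono_ae (ae_restrict_of_forall_mem measurableSet_ball.compl hpt)
      _ = ENNReal.ofReal (R ^ (α - (d : ℝ))) * ∫⁻ y in (ball x R)ᶜ, ENNReal.ofReal |f y| :=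
          lintegral_const_mul' _ _ ENNReal.ofReal_ne_top
      _ ≤ ENNReal.ofReal (R ^ (α - (d : ℝ))) * ∫⁻ y, ENNReal.ofReal |f y| :=
          mul_le_mul_right (setLIntegral_le_lintegral _ _) _
      _ = 1 * ENNReal.ofReal (R ^ (α - (d : ℝ) / 1)) * eLpNorm f (ENNReal.ofReal 1) volume := by
          rw [ENNReal.ofReal_one, eLpNorm_one_eq_lintegral_enorm, one_mul, div_one]
          congr 1
          exact lintegral_congr fun y => (Real.enorm_eq_ofReal_abs (f y)).symm
  · -- case 1 < p
    have hp0 : (0:ℝ) < p := by linarith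
    have hpq : p.HolderConjugate p.conjExponent := Real.HolderConjugate.conjExponent hp1
    set q := p.conjExponent with hqdef
    have hq1 : 1 < q := hpq.symm.lt
    have hq0 : (0:ℝ) < q := by linarith
    have hinv := hpq.inv_add_inv_eq_one
    have hq'' : p * q = p + q := by field_simp at hinv; linarith
    set s := (α - (d : ℝ)) * q with hs
    have hkey : (s + (d : ℝ)) * p = q * (α * p - (d : ℝ)) := by
      rw [hs]; linear_combination (-(d:ℝ)) * hq''
    have h5 : (s + (d : ℝ)) * p < 0 := by
      rw [hkey]; exact mul_neg_of_pos_of_neg hq0 (by linarith)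
    have hsd : s + (d : ℝ) < 0 := by nlinarith
    have he : (s + (d : ℝ)) * (1 / q) = α - (d : ℝ) / p := by
      field_simp
      linear_combination hkey
    have h2lt : ENNReal.ofReal ((2:ℝ) ^ (s + (d : ℝ))) < 1 :=
      ENNReal.ofReal_lt_one.2 (Real.rpow_lt_one_of_one_lt_of_neg one_lt_two hsd)
    set D := ENNReal.ofReal ((2:ℝ) ^ (d : ℝ)) *
      ((1 - ENNReal.ofReal ((2:ℝ) ^ (s + (d : ℝ))))⁻¹
        * volume (ball (0 : EuclideanSpace ℝ (Fin d)) 1)) with hD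
    have hD_ne : D ≠ ⊤ :=
      ENNReal.mul_ne_top ENNReal.ofReal_ne_top
        (ENNReal.mul_ne_top (ENNReal.inv_ne_top.2 (tsub_pos_of_lt h2lt).ne')
          measure_ball_lt_top.ne)
    refine ⟨D ^ (1 / q), ENNReal.rpow_ne_top_of_nonneg (by positivity) hD_ne, ?_⟩
    intro f hf x R hR
    set g : EuclideanSpace ℝ (Fin d) → ℝ≥0∞ := fun y => ENNReal.ofReal |f y| with hgdef
    set k : EuclideanSpace ℝ (Fin d) → ℝ≥0∞ :=
      fun y => ENNReal.ofReal (‖x - y‖ ^ (α - (d : ℝ))) with hkdef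
    have habs : AEMeasurable (fun y => |f y|) volume := by
      have h := hf.1.aemeasurable.norm
      simpa only [Real.norm_eq_abs] using h
    have hgm : AEMeasurable g (volume.restrict (ball x R)ᶜ) :=
      (ENNReal.measurable_ofReal.comp_aemeasurable habs).restrict
    have hkm : Measurable k :=
      ENNReal.measurable_ofReal.comp
        (((measurable_const.sub measurable_id).norm).pow measurable_const)
    have hholder := ENNReal.lintegral_mul_le_Lp_mul_Lq (volume.restrict (ball x R)ᶜ)
      hpq hgm hkm.aemeasurable
    have hpne : ENNReal.ofReal p ≠ 0 := (ENNReal.ofReal_pos.2 hp0).ne'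
    have h1 : (∫⁻ y in (ball x R)ᶜ, g y ^ p) ^ (1 / p) ≤ eLpNorm f (ENNReal.ofReal p) volume := by
      rw [eLpNorm_eq_lintegral_rpow_enorm_toReal hpne ENNReal.ofReal_ne_top,
        ENNReal.toReal_ofReal hp0.le]
      refine ENNReal.rpow_le_rpow ?_ (by positivity)
      refine (setLIntegral_le_lintegral _ _).trans (le_of_eq (lintegral_congr fun y => ?_))
      rw [Real.enorm_eq_ofReal_abs]
    have h2 : (∫⁻ y in (ball x R)ᶜ, k y ^ q) ≤ ENNReal.ofReal (R ^ (s + (d : ℝ))) * D := by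
      have hpt : ∀ y, k y ^ q = ENNReal.ofReal (‖x - y‖ ^ s) := by
        intro y
        rw [hkdef]
        rw [ENNReal.ofReal_rpow_of_nonneg (Real.rpow_nonneg (norm_nonneg _) _) hq0.le,
          ← Real.rpow_mul (norm_nonneg _), ← hs]
      simp_rw [hpt]
      exact hedberg_far_kernel hd hsd x R hR
    have h3 : (∫⁻ y in (ball x R)ᶜ, k y ^ q) ^ (1 / q)
        ≤ ENNReal.ofReal (R ^ (α - (d : ℝ) / p)) * D ^ (1 / q) := by
      refine (ENNReal.rpow_le_rpow h2 (by positivity)).trans (le_of_eq ?_)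
      rw [ENNReal.mul_rpow_of_nonneg _ _ (by positivity),
        ENNReal.ofReal_rpow_of_pos (Real.rpow_pos_of_pos hR _),
        ← Real.rpow_mul hR.le, he]
    calc ∫⁻ y in (ball x R)ᶜ, g y * k y
        ≤ (∫⁻ y in (ball x R)ᶜ, g y ^ p) ^ (1 / p) * (∫⁻ y in (ball x R)ᶜ, k y ^ q) ^ (1 / q) :=
          hholder
      _ ≤ eLpNorm f (ENNReal.ofReal p) volume * (ENNReal.ofReal (R ^ (α - (d : ℝ) / p)) * D ^ (1 / q)) :=
          mul_le_mul' h1 h3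
      _ = D ^ (1 / q) * ENNReal.ofReal (R ^ (α - (d : ℝ) / p)) * eLpNorm f (ENNReal.ofReal p) volume := by
          ring

end HedbergAux


/-- Hedberg's pointwise estimate:
`|I_α f(x)| ≤ C (Mf(x))^(1-αp/d) ‖f‖_{L^p}^(αp/d)`. -/
theorem hedberg_pointwise (d : ℕ) (hd : 1 ≤ d) (α p : ℝ)
    (hα : 0 < α) (hαd : α < d) (hp : 1 ≤ p) (hpd : p < (d : ℝ) / α) :
    ∃ C : ℝ≥0∞, C ≠ ⊤ ∧ 0 < C ∧
      ∀ f : EuclideanSpace ℝ (Fin d) → ℝ, MemLp f (ENNReal.ofReal p) volume →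
        ∀ x, ENNReal.ofReal |rieszPotential d α f x|
          ≤ C * (maximalFn d f x) ^ (1 - α * p / d) *
              (eLpNorm f (ENNReal.ofReal p) volume) ^ (α * p / d) := by
  classical
  have hd1 : (1:ℝ) ≤ d := by exact_mod_cast hd
  have hd0 : (0:ℝ) < d := by linarith
  have hαp : α * p < d := by
    have h := (lt_div_iff₀ hα).1 hpd
    linarith
  have hθ0 : 0 < α * p / (d:ℝ) := by positivity
  have hθ1 : α * p / (d:ℝ) < 1 := (div_lt_one hd0).2 hαp
  obtain ⟨Cn, hCn_ne, hCn⟩ := HedbergAux.hedberg_near hd hα hαd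
  obtain ⟨Cf, hCf_ne, hCf⟩ := HedbergAux.hedberg_far hd hα hαd hp hαp
  set γi := ENNReal.ofReal (rieszGamma d α)⁻¹ with hγi
  refine ⟨1 + γi * (Cn + Cf), ?_, ?_, ?_⟩
  · exact ENNReal.add_ne_top.2 ⟨ENNReal.one_ne_top,
      ENNReal.mul_ne_top ENNReal.ofReal_ne_top (ENNReal.add_ne_top.2 ⟨hCn_ne, hCf_ne⟩)⟩
  · exact lt_of_lt_of_le zero_lt_one le_self_add
  intro f hf x
  have hpne : ENNReal.ofReal p ≠ 0 := (ENNReal.ofReal_pos.2 (by linarith)).ne'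
  have hstep := HedbergAux.hedberg_pointwise_le hα hαd f x
  set M := maximalFn d f x with hM
  set N := eLpNorm f (ENNReal.ofReal p) volume with hN
  have hN_top : N ≠ ⊤ := hf.2.ne
  set K := ∫⁻ y, ENNReal.ofReal |f y| * ENNReal.ofReal (‖x - y‖ ^ (α - (d:ℝ))) with hK
  by_cases hN0 : N = 0
  · have hf0 : f =ᵐ[volume] 0 := (eLpNorm_eq_zero_iff hf.1 hpne).1 hN0
    have hK0 : K = 0 := by
      have hae : (fun y => ENNReal.ofReal |f y| * ENNReal.ofReal (‖x - y‖ ^ (α - (d:ℝ))))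
          =ᵐ[volume] 0 := hf0.mono fun y hy => by simp [hy]
      rw [hK, lintegral_congr_ae hae]; simp
    have hle0 : ENNReal.ofReal |rieszPotential d α f x| ≤ 0 := by
      calc ENNReal.ofReal |rieszPotential d α f x| ≤ γi * K := hstep
        _ = 0 := by rw [hK0, mul_zero]
    exact hle0.trans zero_le
  have hNpos : 0 < N := pos_iff_ne_zero.2 hN0
  by_cases hMtop : M = ⊤
  · have h1 : M ^ (1 - α * p / (d:ℝ)) = ⊤ := by
      rw [hMtop]; exact ENNReal.top_rpow_of_pos (by linarith)
    have h2 : N ^ (α * p / (d:ℝ)) ≠ 0 := (ENNReal.rpow_pos hNpos hN_top).ne'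
    have hC0 : (1 + γi * (Cn + Cf)) ≠ 0 := (lt_of_lt_of_le zero_lt_one le_self_add).ne'
    rw [h1, ENNReal.mul_top hC0, ENNReal.top_mul h2]
    exact le_top
  by_cases hM0 : M = 0
  · exfalso
    have hterm : ∀ n : ℕ, ∫⁻ y in ball x ((n:ℝ)+1), ENNReal.ofReal |f y| = 0 := by
      intro n
      have h1 : (volume (ball x ((n:ℝ)+1)))⁻¹ * ∫⁻ y in ball x ((n:ℝ)+1), ENNReal.ofReal |f y|
          ≤ 0 := by
        rw [← hM0, hM]
        unfold maximalFn
        exact le_iSup_of_le ⟨(n:ℝ)+1, by positivity⟩ le_rfl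
      have h2 : (volume (ball x ((n:ℝ)+1)))⁻¹ * ∫⁻ y in ball x ((n:ℝ)+1), ENNReal.ofReal |f y|
          = 0 := le_antisymm h1 zero_le
      rcases mul_eq_zero.1 h2 with h | h
      · exact absurd h (ENNReal.inv_ne_zero.2 measure_ball_lt_top.ne)
      · exact h
    have htot : ∫⁻ y, ENNReal.ofReal |f y| = 0 := by
      have hcover : (Set.univ : Set (EuclideanSpace ℝ (Fin d))) ⊆ ⋃ n : ℕ, ball x ((n:ℝ)+1) := by
        intro y _
        obtain ⟨n, hn⟩ := exists_nat_gt (dist y x)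
        exact Set.mem_iUnion.2 ⟨n, mem_ball.2 (by linarith)⟩
      have hle : ∫⁻ y, ENNReal.ofReal |f y|
          ≤ ∑' n : ℕ, ∫⁻ y in ball x ((n:ℝ)+1), ENNReal.ofReal |f y| := by
        have h := lintegral_mono_set (μ := volume) (f := fun y => ENNReal.ofReal |f y|) hcover
        rw [setLIntegral_univ] at h
        exact h.trans (lintegral_iUnion_le _ _)
      simp only [hterm, tsum_zero] at hle
      exact le_antisymm hle zero_le
    have habs : AEMeasurable (fun y => |f y|) volume := by
      have h := hf.1.aemeasurable.norm
      simpa only [Real.norm_eq_abs] using h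
    have hae := (lintegral_eq_zero_iff'
      (ENNReal.measurable_ofReal.comp_aemeasurable habs)).1 htot
    have hf0 : f =ᵐ[volume] 0 := by
      refine hae.mono fun y hy => ?_
      simp only [Pi.zero_apply, Function.comp_apply, ENNReal.ofReal_eq_zero] at hy ⊢
      exact abs_eq_zero.1 (le_antisymm hy (abs_nonneg (f y)))
    exact hN0 (by rw [hN, eLpNorm_eq_zero_iff hf.1 hpne]; exact hf0)
  -- main case
  set m := M.toReal with hm_def
  set n := N.toReal with hn_def
  have hm : 0 < m := ENNReal.toReal_pos hM0 hMtop
  have hn : 0 < n := ENNReal.toReal_pos hN0 hN_top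
  set R := (n / m) ^ (p / (d:ℝ)) with hR_def
  have hR : 0 < R := Real.rpow_pos_of_pos (div_pos hn hm) _
  have hM_eq : M = ENNReal.ofReal m := (ENNReal.ofReal_toReal hMtop).symm
  have hN_eq : N = ENNReal.ofReal n := (ENNReal.ofReal_toReal hN_top).symm
  have hKle : K ≤ Cn * ENNReal.ofReal (R ^ α) * M
      + Cf * ENNReal.ofReal (R ^ (α - (d:ℝ)/p)) * N := by
    rw [hK, ← lintegral_add_compl
      (fun y => ENNReal.ofReal |f y| * ENNReal.ofReal (‖x - y‖ ^ (α - (d:ℝ))))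
      (measurableSet_ball : MeasurableSet (ball x R))]
    exact add_le_add (hCn f x R hR) (hCf f hf x R hR)
  set X := ENNReal.ofReal (n ^ (α * p / (d:ℝ)) * m ^ (1 - α * p / (d:ℝ))) with hX
  have e1 : ENNReal.ofReal (R ^ α) * M = X := by
    rw [hM_eq, ← ENNReal.ofReal_mul (by positivity), hX]
    congr 1
    rw [hR_def, ← Real.rpow_mul (div_pos hn hm).le,
      show p / (d:ℝ) * α = α * p / (d:ℝ) by ring,
      Real.div_rpow hn.le hm.le]
    have em : m ^ (1 - α * p / (d:ℝ)) = m / m ^ (α * p / (d:ℝ)) := by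
      rw [Real.rpow_sub hm, Real.rpow_one]
    rw [em]
    field_simp
  have e2 : ENNReal.ofReal (R ^ (α - (d:ℝ)/p)) * N = X := by
    rw [hN_eq, ← ENNReal.ofReal_mul (by positivity), hX]
    congr 1
    rw [hR_def, ← Real.rpow_mul (div_pos hn hm).le,
      show p / (d:ℝ) * (α - (d:ℝ)/p) = α * p / (d:ℝ) - 1 by
        field_simp,
      Real.div_rpow hn.le hm.le]
    have en : n ^ (α * p / (d:ℝ) - 1) = n ^ (α * p / (d:ℝ)) / n := by
      rw [Real.rpow_sub hn, Real.rpow_one]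
    have em2 : m ^ (α * p / (d:ℝ) - 1) = m ^ (α * p / (d:ℝ)) / m := by
      rw [Real.rpow_sub hm, Real.rpow_one]
    have em : m ^ (1 - α * p / (d:ℝ)) = m / m ^ (α * p / (d:ℝ)) := by
      rw [Real.rpow_sub hm, Real.rpow_one]
    rw [en, em2, em]
    field_simp
  have hKle2 : K ≤ (Cn + Cf) * X := by
    calc K ≤ Cn * ENNReal.ofReal (R ^ α) * M
        + Cf * ENNReal.ofReal (R ^ (α - (d:ℝ)/p)) * N := hKle
      _ = Cn * X + Cf * X := by rw [mul_assoc, mul_assoc, e1, e2]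
      _ = (Cn + Cf) * X := (add_mul _ _ _).symm
  have hXeq : M ^ (1 - α * p / (d:ℝ)) * N ^ (α * p / (d:ℝ)) = X := by
    rw [hM_eq, hN_eq, ENNReal.ofReal_rpow_of_pos hm, ENNReal.ofReal_rpow_of_pos hn,
      ← ENNReal.ofReal_mul (by positivity), hX, mul_comm]
  calc ENNReal.ofReal |rieszPotential d α f x| ≤ γi * K := hstep
    _ ≤ γi * ((Cn + Cf) * X) := mul_le_mul_right hKle2 _
    _ = γi * (Cn + Cf) * (M ^ (1 - α * p / (d:ℝ)) * N ^ (α * p / (d:ℝ))) := by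
        rw [hXeq, mul_assoc]
    _ ≤ (1 + γi * (Cn + Cf)) * (M ^ (1 - α * p / (d:ℝ)) * N ^ (α * p / (d:ℝ))) :=
        mul_le_mul_left le_add_self _
    _ = (1 + γi * (Cn + Cf)) * M ^ (1 - α * p / (d:ℝ)) * N ^ (α * p / (d:ℝ)) :=
        (mul_assoc _ _ _).symm
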